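/- Let E be a directed graph whose only hereditary and saturated subsets of E^0 are ∅ and E^0. If E contains a closed path with no exit, then E is row-finite, i.e., s^{-1}(v) is finite for every vertex v ∈ E^0. -/

import Mathlib

/-- A directed graph `E = (E⁰, E¹, r, s)`: `V` is the vertex set `E⁰`, `Edg` is the
edge set `E¹`, and `s`, `r` give the source and range of each edge. -/
structure DGraph (V : Type*) (Edg : Type*) where
  s : Edg → V
  r : Edg → V

namespace DGraph

variable {V Edg : Type*}

/-- There is an edge from `v` to `w`. -/
def Adj (G : DGraph V Edg) (v w : V) : Prop := ∃ e, G.s e = v ∧ G.r e = w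

/-- There is a path (possibly of length zero, i.e. a vertex) from `v` to `w`. -/
def Reaches (G : DGraph V Edg) : V → V → Prop := Relation.ReflTransGen G.Adj

/-- A subset `X ⊆ E⁰` is hereditary if `r(e) ∈ X` whenever `s(e) ∈ X`. -/
def Hereditary (G : DGraph V Edg) (X : Set V) : Prop := ∀ e, G.s e ∈ X → G.r e ∈ X

/-- A vertex is a finite emitter if `s⁻¹(v)` is finite and nonempty. -/
def FiniteEmitter (G : DGraph V Edg) (v : V) : Prop :=
  {e | G.s e = v}.Finite ∧ {e | G.s e = v}.Nonempty

/-- A subset `X ⊆ E⁰` is saturated if every finite emitter `v` with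
`r(s⁻¹(v)) ⊆ X` lies in `X`. -/
def Saturated (G : DGraph V Edg) (X : Set V) : Prop :=
  ∀ v, FiniteEmitter G v → (∀ e, G.s e = v → G.r e ∈ X) → v ∈ X

/-- The hereditary saturated closure of `X`: the smallest hereditary and saturated
subset of `E⁰` containing `X`. -/
def satClosure (G : DGraph V Edg) (X : Set V) : Set V :=
  ⋂₀ {Y | Hereditary G Y ∧ Saturated G Y ∧ X ⊆ Y}

/-- The consecutive edges of a path match up: `r(eᵢ) = s(eᵢ₊₁)`. -/
def IsChain (G : DGraph V Edg) (p : List Edg) : Prop :=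
  List.Chain' (fun e f => G.r e = G.s f) p

/-- `p` is a closed path (of length ≥ 1) based at `v`. -/
def IsClosedPathAt (G : DGraph V Edg) (p : List Edg) (v : V) : Prop :=
  ∃ hne : p ≠ [], IsChain G p ∧ G.s (p.head hne) = v ∧ G.r (p.getLast hne) = v

/-- `p` is a closed path (of length ≥ 1). -/
def IsClosedPath (G : DGraph V Edg) (p : List Edg) : Prop := ∃ v, IsClosedPathAt G p v

/-- The vertex set `α⁰ = {s(e₁), …, s(eₙ)}` of a path. -/
def pathVerts (G : DGraph V Edg) (p : List Edg) : Set V := {w | ∃ e ∈ p, G.s e = w}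

/-- An exit of a closed path `e₁⋯eₙ` is an edge `f` with `s(f) = s(eᵢ)` and
`f ≠ eᵢ` for some `i`. -/
def IsExitOf (G : DGraph V Edg) (f : Edg) (p : List Edg) : Prop :=
  ∃ e ∈ p, G.s f = G.s e ∧ f ≠ e

/-- `p` is a simple closed path based at `v`: a closed path whose sources are
pairwise distinct. -/
def IsSimpleClosedPathAt (G : DGraph V Edg) (p : List Edg) (v : V) : Prop :=
  IsClosedPathAt G p v ∧ (p.map G.s).Nodup

end DGraph

/-- In a chain, every element either has a successor in the list or is the last
element. -/
lemma chain_aux {V Edg : Type*} (G : DGraph V Edg) :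
    ∀ (p : List Edg), G.IsChain p → ∀ e ∈ p,
      (∃ f ∈ p, G.r e = G.s f) ∨ ∀ h : p ≠ [], e = p.getLast h := by
  intro p
  induction p with
  | nil => intro _ e he; exact absurd he List.not_mem_nil
  | cons a q ih =>
    intro hch e he
    cases q with
    | nil =>
      right
      intro h
      simpa using he
    | cons b q' =>
      rw [DGraph.IsChain, List.Chain', List.isChain_cons_cons] at hch
      obtain ⟨hab, hq⟩ := hch
      rcases List.mem_cons.mp he with rfl | he'
      · exact Or.inl ⟨b, by simp, hab⟩
      · rcases ih hq e he' with ⟨f, hf, hrf⟩ | hl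
        · exact Or.inl ⟨f, List.mem_cons_of_mem _ hf, hrf⟩
        · right
          intro h
          rw [List.getLast_cons (by simp)]
          exact hl (by simp)

/-- if the only hereditary and saturated subsets of `E⁰` are `∅` and
`E⁰`, and `E` contains a closed path with no exit, then `E` is row-finite. -/
theorem stmt6 {V Edg : Type*} (G : DGraph V Edg)
    (htriv : ∀ X : Set V, G.Hereditary X → G.Saturated X → X = ∅ ∨ X = Set.univ)
    (α : List Edg) (hα : G.IsClosedPath α) (hnoexit : ∀ f, ¬ G.IsExitOf f α) :
    ∀ v : V, {e | G.s e = v}.Finite := by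
  obtain ⟨v, hne, hchain, hhead, hlast⟩ := hα
  set PV := G.pathVerts α with hPV
  have huniq : ∀ f e, e ∈ α → G.s f = G.s e → f = e := by
    intro f e he hfe
    by_contra h
    exact hnoexit f ⟨e, he, hfe, h⟩
  -- vertices of the cycle: edges out of them stay in the cycle
  have hstep : ∀ e, G.s e ∈ PV → G.r e ∈ PV := by
    rintro e ⟨e', he', hse'⟩
    have : e = e' := huniq e e' he' hse'.symm
    subst this
    rcases chain_aux G α hchain e he' with ⟨f, hf, hrf⟩ | hl
    · exact ⟨f, hf, hrf.symm⟩
    · have : G.r e = v := by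
        rw [hl hne]; exact hlast
      exact ⟨α.head hne, List.head_mem hne, by rw [this, hhead]⟩
  have hreach : ∀ c u, G.Reaches c u → c ∈ PV → u ∈ PV := by
    intro c u h
    induction h with
    | refl => exact id
    | tail _ hadj ih =>
      intro hc
      obtain ⟨e, hse, hre⟩ := hadj
      have := hstep e (by rw [hse]; exact ih hc)
      rwa [hre] at this
  have hfinPV : ∀ c ∈ PV, {e | G.s e = c}.Finite := by
    rintro c ⟨e', he', hse'⟩
    apply Set.Finite.subset (List.finite_toSet α)
    intro f hf
    have : f = e' := huniq f e' he' (by rw [Set.mem_setOf_eq] at hf; rw [hf, hse'])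
    subst this; exact he'
  -- the key hereditary saturated set
  set Y : Set V := {w | ∀ u, G.Reaches w u → {e | G.s e = u}.Finite} with hYdef
  have hY_her : G.Hereditary Y := by
    intro e hse u hu
    exact hse u (Relation.ReflTransGen.head ⟨e, rfl, rfl⟩ hu)
  have hY_sat : G.Saturated Y := by
    intro w hfe hall u hu
    rcases Relation.ReflTransGen.cases_head hu with rfl | ⟨b, hadj, hb⟩
    · exact hfe.1
    · obtain ⟨e, hse, hre⟩ := hadj
      exact hall e hse u (by rw [hre]; exact hb)
  have hPVY : PV ⊆ Y := by
    intro c hc u hu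
    exact hfinPV u (hreach c u hu hc)
  have hvY : v ∈ Y := hPVY ⟨α.head hne, List.head_mem hne, hhead⟩
  rcases htriv Y hY_her hY_sat with h | h
  · rw [h] at hvY; exact absurd hvY (Set.notMem_empty v)
  · intro w
    have hw : w ∈ Y := h ▸ Set.mem_univ w
    exact hw w Relation.ReflTransGen.refl
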